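/- Any language L over alphabet {T, W, U} such that for all q ≥ 1 the word TTW^(6q-2)U^(3q) ∈ L, and such that every word in L has at most as many U's as can be matched by the tuck-depth constraint (specifically, every word w ∈ L satisfies #U(w) ≤ (#T(w) + #W(w))/2), is not regular. -/

import Mathlib

/-- The alphabet {T, W, U} for tie-knot strings. -/
inductive TieSym : Type
  | T : TieSym
  | W : TieSym
  | U : TieSym
  deriving DecidableEq

open TieSym

lemma TieSym.count_sum (w : List TieSym) :
    w.count T + w.count W + w.count U = w.length := by
  induction w with
  | nil => simp
  | cons a tl ih =>
    cases a <;> simp [List.count_cons, List.length_cons] <;> omega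

/-- Any language over {T, W, U} containing all words `T·T·W^(6q-2)·U^(3q)` (q ≥ 1) and in
which every word satisfies the tuck-depth constraint `#U ≤ (#T + #W)/2`
(i.e. `2·#U ≤ #T + #W`) is not regular. -/
theorem deeper_tucked_not_regular (L : Language TieSym)
    (hmem : ∀ q : ℕ, 1 ≤ q →
      ([T, T] ++ List.replicate (6 * q - 2) W ++ List.replicate (3 * q) U) ∈ L)
    (hconstraint : ∀ w ∈ L, 2 * w.count U ≤ w.count T + w.count W) :
    ¬ L.IsRegular := by
  rintro ⟨σ, hfin, M, rfl⟩
  set n := Fintype.card σ with hn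
  set q := n + 1 with hq
  set x := ([T, T] ++ List.replicate (6 * q - 2) W ++ List.replicate (3 * q) U) with hx
  have hxmem : x ∈ M.accepts := hmem q (by omega)
  have hxlen : n ≤ x.length := by
    simp only [hx, List.length_append, List.length_replicate, List.length_cons,
      List.length_nil]
    omega
  obtain ⟨a, b, c, hsplit, hab, hbne, hpump⟩ := M.pumping_lemma hxmem hxlen
  have hacmem : a ++ c ∈ M.accepts := by
    apply hpump
    show a ++ c ∈ ({a} * KStar.kstar {b} * {c} : Language TieSym)
    rw [Language.mem_mul]
    exact ⟨a, Language.mem_mul.2 ⟨a, rfl, [], Language.nil_mem_kstar _, by simp⟩,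
      c, rfl, rfl⟩
  -- a ++ b is a prefix of the winding part
  have hpre1 : a ++ b <+: x := ⟨c, hsplit.symm⟩
  have hpre2 : ([T, T] ++ List.replicate (6 * q - 2) W : List TieSym) <+: x :=
    ⟨List.replicate (3 * q) U, by simp [hx]⟩
  have hlen2 : (a ++ b).length ≤ ([T, T] ++ List.replicate (6 * q - 2) W : List TieSym).length := by
    simp only [List.length_append, List.length_replicate, List.length_cons, List.length_nil]
    omega
  have hpre : a ++ b <+: ([T, T] ++ List.replicate (6 * q - 2) W) :=
    List.prefix_of_prefix_length_le hpre1 hpre2 hlen2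
  have hbU : b.count U = 0 := by
    have h1 : (a ++ b).count U ≤ ([T, T] ++ List.replicate (6 * q - 2) W : List TieSym).count U :=
      hpre.sublist.count_le _
    simp only [List.count_append, List.count_replicate] at h1 ⊢
    simp [List.count_cons] at h1
    omega
  have hcnt := hconstraint (a ++ c) hacmem
  have hxU : x.count U = 3 * q := by
    simp [hx, List.count_replicate, List.count_cons]
  have hxTW : x.count T + x.count W = 6 * q := by
    simp [hx, List.count_replicate, List.count_cons]
    omega
  have hsum := TieSym.count_sum b
  have hblen : 1 ≤ b.length := List.length_pos_iff.2 hbne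
  have hxsplit : x = a ++ b ++ c := hsplit
  rw [hxsplit] at hxU hxTW
  simp only [List.count_append] at hxU hxTW hcnt
  omega
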